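/- Let m, n ≥ 2 and let s₁, s₂ be positive integers with gcd(m, s₁) = 1, gcd(n, s₂) = 1, and s₁ + s₂ = gcd(m, n). Then the Cartesian product of the directed cycles on m and n vertices (arcs (x, y) → (x+1, y) and (x, y) → (x, y+1) on ℤ/m × ℤ/n) admits a directed Hamiltonian cycle H such that every gcd(m, n) consecutive arcs of H contain exactly s₁ arcs in the first dimension and exactly s₂ arcs in the second dimension. -/

import Mathlib

/-!
The Cartesian product of the directed cycles on `m` and `n` vertices is the
digraph on `ZMod m × ZMod n` with arcs `(x, y) → (x+1, y)` (said to be in the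
first dimension) and `(x, y) → (x, y+1)` (said to be in the second dimension).
A directed Hamiltonian cycle is a cyclic enumeration `H : ZMod (m*n) → ZMod m
× ZMod n` of all `m*n` vertices following the arc directions; windows of
consecutive arcs are read cyclically.
-/

/-- There is an arc from `u` to `v` in the Cartesian product of the directed
cycles on `m` and `n` vertices. -/
def DirProdStep {m n : ℕ} (u v : ZMod m × ZMod n) : Prop :=
  (v.1 = u.1 + 1 ∧ v.2 = u.2) ∨ (v.1 = u.1 ∧ v.2 = u.2 + 1)

/-- A directed Hamiltonian cycle of the Cartesian product of the directed
cycles on `m` and `n` vertices. -/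
def IsDirHamCycle2 {m n : ℕ} (H : ZMod (m * n) → ZMod m × ZMod n) : Prop :=
  Function.Bijective H ∧ ∀ t, DirProdStep (H t) (H (t + 1))

/-- The arc of `H` at position `s` is in the first dimension. -/
def ArcInDim1 {m n : ℕ} (H : ZMod (m * n) → ZMod m × ZMod n)
    (s : ZMod (m * n)) : Prop :=
  (H (s + 1)).1 = (H s).1 + 1 ∧ (H (s + 1)).2 = (H s).2

/-- The arc of `H` at position `s` is in the second dimension. -/
def ArcInDim2 {m n : ℕ} (H : ZMod (m * n) → ZMod m × ZMod n)
    (s : ZMod (m * n)) : Prop :=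
  (H (s + 1)).1 = (H s).1 ∧ (H (s + 1)).2 = (H s).2 + 1


instance {m n : ℕ} (H : ZMod (m * n) → ZMod m × ZMod n) (s : ZMod (m * n)) :
    Decidable (ArcInDim1 H s) :=
  inferInstanceAs (Decidable (_ ∧ _))

instance {m n : ℕ} (H : ZMod (m * n) → ZMod m × ZMod n) (s : ZMod (m * n)) :
    Decidable (ArcInDim2 H s) :=
  inferInstanceAs (Decidable (_ ∧ _))

/-- Every window of `w` consecutive arcs of `H` contains exactly `s₁` arcs in
the first dimension and exactly `s₂` arcs in the second dimension. -/
def WindowCounts {m n : ℕ} (H : ZMod (m * n) → ZMod m × ZMod n)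
    (w s₁ s₂ : ℕ) : Prop :=
  ∀ t : ZMod (m * n),
    ((Finset.range w).filter (fun a => ArcInDim1 H (t + (a : ℕ)))).card = s₁ ∧
    ((Finset.range w).filter (fun a => ArcInDim2 H (t + (a : ℕ)))).card = s₂


namespace TEaux

def f1 (d s₁ k : ℕ) : ℕ := s₁ * (k / d) + min (k % d) s₁
def f2 (d s₁ s₂ k : ℕ) : ℕ := s₂ * (k / d) + (k % d - s₁)

theorem f_add (d s₁ s₂ : ℕ) (hsum : s₁ + s₂ = d) (k : ℕ) :
    f1 d s₁ k + f2 d s₁ s₂ k = k := by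
  have hk := Nat.div_add_mod k d
  have h2 : s₁ * (k / d) + s₂ * (k / d) = d * (k / d) := by rw [← hsum, add_mul]
  unfold f1 f2
  omega

theorem step (d s₁ s₂ k : ℕ) (hd : 0 < d) (hs₂ : 0 < s₂) (hsum : s₁ + s₂ = d) :
    (k % d < s₁ → f1 d s₁ (k+1) = f1 d s₁ k + 1 ∧ f2 d s₁ s₂ (k+1) = f2 d s₁ s₂ k)
    ∧ (s₁ ≤ k % d → f1 d s₁ (k+1) = f1 d s₁ k ∧ f2 d s₁ s₂ (k+1) = f2 d s₁ s₂ k + 1) := by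
  have hr : k % d < d := Nat.mod_lt _ hd
  have hk := Nat.div_add_mod k d
  by_cases hcase : k % d + 1 < d
  · have hkey : k + 1 = (k % d + 1) + d * (k / d) := by omega
    have hdiv : (k+1)/d = k/d := by
      rw [hkey, Nat.add_mul_div_left _ _ hd, Nat.div_eq_of_lt hcase, Nat.zero_add]
    have hmod : (k+1) % d = k % d + 1 := by
      rw [hkey, Nat.add_mul_mod_self_left, Nat.mod_eq_of_lt hcase]
    constructor <;> intro h <;> unfold f1 f2 <;> rw [hdiv, hmod] <;> omega
  · have heq : k % d + 1 = d := by omega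
    have hkey : k + 1 = d * (k / d + 1) := by
      have : d * (k / d + 1) = d * (k / d) + d := by ring
      omega
    have hdiv : (k+1)/d = k/d + 1 := by rw [hkey, Nat.mul_div_cancel_left _ hd]
    have hmod : (k+1) % d = 0 := by rw [hkey, Nat.mul_mod_right]
    have hmul1 : s₁ * (k / d + 1) = s₁ * (k / d) + s₁ := by ring
    have hmul2 : s₂ * (k / d + 1) = s₂ * (k / d) + s₂ := by ring
    constructor <;> intro h <;> unfold f1 f2 <;> rw [hdiv, hmod] <;> omega

theorem f1_shift (d s₁ k e : ℕ) (hd : 0 < d) :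
    f1 d s₁ (k + d * e) = f1 d s₁ k + s₁ * e := by
  unfold f1
  rw [Nat.add_mul_div_left _ _ hd, Nat.add_mul_mod_self_left, mul_add]
  ring

theorem f2_shift (d s₁ s₂ k e : ℕ) (hd : 0 < d) :
    f2 d s₁ s₂ (k + d * e) = f2 d s₁ s₂ k + s₂ * e := by
  unfold f2
  rw [Nat.add_mul_div_left _ _ hd, Nat.add_mul_mod_self_left, mul_add]
  ring

theorem count_shift (d c : ℕ) (hd : 0 < d) (p : ℕ → Prop) [DecidablePred p] :
    ((Finset.range d).filter fun a => p ((c + a) % d)).card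
      = ((Finset.range d).filter p).card := by
  have hinj : Set.InjOn (fun a => (c + a) % d) (Finset.range d) := by
    intro a ha b hb hab
    simp only [Finset.coe_range, Set.mem_Iio] at ha hb
    have h1 : (c + a) ≡ (c + b) [MOD d] := hab
    have h2 := Nat.ModEq.add_left_cancel' c h1
    simpa [Nat.ModEq, Nat.mod_eq_of_lt ha, Nat.mod_eq_of_lt hb] using h2
  have himg : (Finset.range d).image (fun a => (c + a) % d) = Finset.range d := by
    apply Finset.eq_of_subset_of_card_le
    · intro x hx
      simp only [Finset.mem_image, Finset.mem_range] at hx ⊢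
      obtain ⟨a, _, rfl⟩ := hx
      exact Nat.mod_lt _ hd
    · rw [Finset.card_image_of_injOn hinj]
  calc ((Finset.range d).filter fun a => p ((c + a) % d)).card
      = (((Finset.range d).filter fun a => p ((c + a) % d)).image
          (fun a => (c + a) % d)).card := by
        rw [Finset.card_image_of_injOn (hinj.mono (by
          simp only [Finset.coe_subset]; exact Finset.filter_subset _ _))]
    _ = (((Finset.range d).image (fun a => (c + a) % d)).filter p).card := by
        rw [Finset.filter_image]
    _ = ((Finset.range d).filter p).card := by rw [himg]

end TEaux

/-- **Trotter–Erdős-type construction.**  Let `m, n ≥ 2` and let `s₁, s₂` be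
positive integers with `gcd(m, s₁) = 1`, `gcd(n, s₂) = 1` and
`s₁ + s₂ = gcd(m, n)`.  Then the Cartesian product of the directed cycles on
`m` and `n` vertices admits a directed Hamiltonian cycle `H` such that every
`gcd(m, n)` consecutive arcs of `H` contain exactly `s₁` arcs in the first
dimension and exactly `s₂` arcs in the second dimension. -/

theorem exists_dirHamCycle_of_gcd_split
    (m n : ℕ) (hm : 2 ≤ m) (hn : 2 ≤ n)
    (s₁ s₂ : ℕ) (hs₁ : 0 < s₁) (hs₂ : 0 < s₂)
    (hg₁ : Nat.gcd m s₁ = 1) (hg₂ : Nat.gcd n s₂ = 1)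
    (hsum : s₁ + s₂ = Nat.gcd m n) :
    ∃ H : ZMod (m * n) → ZMod m × ZMod n,
      IsDirHamCycle2 H ∧ WindowCounts H (Nat.gcd m n) s₁ s₂ := by
  set d := Nat.gcd m n with hd_def
  have hm0 : 0 < m := by omega
  have hn0 : 0 < n := by omega
  have hdm : d ∣ m := Nat.gcd_dvd_left m n
  have hdn : d ∣ n := Nat.gcd_dvd_right m n
  have hd0 : 0 < d := Nat.gcd_pos_of_pos_left n hm0
  have hmn0 : 0 < m * n := Nat.mul_pos hm0 hn0
  have hdmn : d ∣ m * n := hdm.mul_right n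
  haveI : NeZero m := ⟨hm0.ne'⟩
  haveI : NeZero n := ⟨hn0.ne'⟩
  haveI : NeZero (m * n) := ⟨hmn0.ne'⟩
  haveI : Fact (1 < m) := ⟨hm⟩
  haveI : Fact (1 < n) := ⟨hn⟩
  have h1mn : 1 < m * n := by have := Nat.mul_le_mul hm hn; omega
  haveI : Fact (1 < m * n) := ⟨h1mn⟩
  set G : ℕ → ZMod m × ZMod n :=
    fun k => ((TEaux.f1 d s₁ k : ZMod m), (TEaux.f2 d s₁ s₂ k : ZMod n)) with hG
  obtain ⟨em, hem⟩ := hdm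
  obtain ⟨en, hen⟩ := hdn
  have hdm' : d ∣ m := ⟨em, hem⟩
  have hper : ∀ k, G (k + m * n) = G k := by
    intro k
    have hmn1 : m * n = d * (em * n) := by rw [hem]; ring
    have hmn2 : m * n = d * (m * en) := by rw [hen]; ring
    have h1 := TEaux.f1_shift d s₁ k (m * en) hd0
    have h2 := TEaux.f2_shift d s₁ s₂ k (em * n) hd0
    rw [← hmn2] at h1
    rw [← hmn1] at h2
    simp only [hG, Prod.mk.injEq]
    constructor
    · rw [h1]; push_cast; rw [ZMod.natCast_self]; ring
    · rw [h2]; push_cast; rw [ZMod.natCast_self]; ring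
  have hperj : ∀ j k, G (k + (m * n) * j) = G k := by
    intro j
    induction j with
    | zero => simp
    | succ j ih =>
      intro k
      have h : k + (m * n) * (j + 1) = (k + m * n) + (m * n) * j := by ring
      rw [h, ih, hper]
  have hmod : ∀ k, G (k % (m * n)) = G k := by
    intro k
    conv_rhs => rw [← Nat.mod_add_div k (m * n)]
    exact (hperj _ _).symm
  set H : ZMod (m * n) → ZMod m × ZMod n := fun t => G t.val with hH
  have hcomp : ∀ s : ZMod (m * n), H s = G s.val := fun _ => rfl
  have hGfst : ∀ k, (G k).1 = (TEaux.f1 d s₁ k : ZMod m) := fun _ => rfl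
  have hGsnd : ∀ k, (G k).2 = (TEaux.f2 d s₁ s₂ k : ZMod n) := fun _ => rfl
  have hHsucc : ∀ t : ZMod (m * n), H (t + 1) = G (t.val + 1) := by
    intro t
    rw [hcomp, ZMod.val_add, ZMod.val_one, hmod]
  have hone_n : (1 : ZMod n) ≠ 0 := one_ne_zero
  have harc : ∀ s : ZMod (m * n),
      (s.val % d < s₁ → ArcInDim1 H s) ∧ (s₁ ≤ s.val % d → ArcInDim2 H s) := by
    intro s
    have hst := TEaux.step d s₁ s₂ s.val hd0 hs₂ hsum
    constructor
    · intro h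
      obtain ⟨e1, e2⟩ := hst.1 h
      refine ⟨?_, ?_⟩
      · rw [hHsucc s, hcomp s, hGfst, hGfst, e1]; push_cast; ring
      · rw [hHsucc s, hcomp s, hGsnd, hGsnd, e2]
    · intro h
      obtain ⟨e1, e2⟩ := hst.2 h
      refine ⟨?_, ?_⟩
      · rw [hHsucc s, hcomp s, hGfst, hGfst, e1]
      · rw [hHsucc s, hcomp s, hGsnd, hGsnd, e2]; push_cast; ring
  have hnot12 : ∀ s : ZMod (m * n), ¬ (ArcInDim1 H s ∧ ArcInDim2 H s) := by
    rintro s ⟨h1, h2⟩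
    exact hone_n (left_eq_add.mp (h1.2.symm.trans h2.2))
  have harc1 : ∀ s : ZMod (m * n), ArcInDim1 H s ↔ s.val % d < s₁ := by
    intro s
    constructor
    · intro h
      by_contra hc
      push_neg at hc
      exact hnot12 s ⟨h, (harc s).2 hc⟩
    · exact (harc s).1
  have harc2 : ∀ s : ZMod (m * n), ArcInDim2 H s ↔ s₁ ≤ s.val % d := by
    intro s
    constructor
    · intro h
      by_contra hc
      push_neg at hc
      exact hnot12 s ⟨(harc s).1 hc, h⟩
    · exact (harc s).2
  have hinj : Function.Injective H := by
    intro t t' h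
    set a := t.val with ha_def
    set b := t'.val with hb_def
    rw [hcomp, hcomp] at h
    have e1 : TEaux.f1 d s₁ a ≡ TEaux.f1 d s₁ b [MOD m] :=
      (ZMod.natCast_eq_natCast_iff _ _ _).mp (congrArg Prod.fst h)
    have e2 : TEaux.f2 d s₁ s₂ a ≡ TEaux.f2 d s₁ s₂ b [MOD n] :=
      (ZMod.natCast_eq_natCast_iff _ _ _).mp (congrArg Prod.snd h)
    have ed : a ≡ b [MOD d] := by
      have g1 := e1.of_dvd ⟨em, hem⟩
      have g2 := e2.of_dvd ⟨en, hen⟩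
      have g3 := g1.add g2
      rwa [TEaux.f_add d s₁ s₂ hsum, TEaux.f_add d s₁ s₂ hsum] at g3
    have hr : a % d = b % d := ed
    have hmin : min (a % d) s₁ = min (b % d) s₁ := by rw [hr]
    have hf1 : ((TEaux.f1 d s₁ b : ℕ) : ℤ) - ((TEaux.f1 d s₁ a : ℕ) : ℤ)
        = (s₁ : ℤ) * (((b / d : ℕ) : ℤ) - ((a / d : ℕ) : ℤ)) := by
      unfold TEaux.f1
      rw [← hmin]
      push_cast
      ring
    have hf2 : ((TEaux.f2 d s₁ s₂ b : ℕ) : ℤ) - ((TEaux.f2 d s₁ s₂ a : ℕ) : ℤ)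
        = (s₂ : ℤ) * (((b / d : ℕ) : ℤ) - ((a / d : ℕ) : ℤ)) := by
      unfold TEaux.f2
      rw [← hr]
      push_cast
      ring
    have hdvd1 : (m : ℤ) ∣ (s₁ : ℤ) * (((b / d : ℕ) : ℤ) - ((a / d : ℕ) : ℤ)) := by
      rw [← hf1]; exact e1.dvd
    have hdvd2 : (n : ℤ) ∣ (s₂ : ℤ) * (((b / d : ℕ) : ℤ) - ((a / d : ℕ) : ℤ)) := by
      rw [← hf2]; exact e2.dvd
    have hcop1 : IsCoprime (m : ℤ) (s₁ : ℤ) := Nat.isCoprime_iff_coprime.mpr hg₁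
    have hcop2 : IsCoprime (n : ℤ) (s₂ : ℤ) := Nat.isCoprime_iff_coprime.mpr hg₂
    have hq1 : (m : ℤ) ∣ (((b / d : ℕ) : ℤ) - ((a / d : ℕ) : ℤ)) :=
      hcop1.dvd_of_dvd_mul_left hdvd1
    have hq2 : (n : ℤ) ∣ (((b / d : ℕ) : ℤ) - ((a / d : ℕ) : ℤ)) :=
      hcop2.dvd_of_dvd_mul_left hdvd2
    have hlcm : ((Nat.lcm m n : ℕ) : ℤ) ∣ (((b / d : ℕ) : ℤ) - ((a / d : ℕ) : ℤ)) := by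
      have h3 := Int.coe_lcm_dvd hq1 hq2
      have hl : Int.lcm (m : ℤ) (n : ℤ) = Nat.lcm m n := by
        simp [Int.lcm]
      rwa [hl] at h3
    have hmn_dvd : ((m * n : ℕ) : ℤ) ∣ (b : ℤ) - (a : ℤ) := by
      have hda := Nat.div_add_mod a d
      have hdb := Nat.div_add_mod b d
      have hda' : (d : ℤ) * ((a / d : ℕ) : ℤ) + ((a % d : ℕ) : ℤ) = (a : ℤ) := by
        exact_mod_cast hda
      have hdb' : (d : ℤ) * ((b / d : ℕ) : ℤ) + ((b % d : ℕ) : ℤ) = (b : ℤ) := by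
        exact_mod_cast hdb
      have hr' : ((a % d : ℕ) : ℤ) = ((b % d : ℕ) : ℤ) := by exact_mod_cast hr
      have hba : (b : ℤ) - a = (d : ℤ) * (((b / d : ℕ) : ℤ) - ((a / d : ℕ) : ℤ)) := by
        linear_combination hda' - hdb' - hr'
      have hgl : (d : ℤ) * ((Nat.lcm m n : ℕ) : ℤ) = ((m * n : ℕ) : ℤ) := by
        rw [hd_def]
        exact_mod_cast Nat.gcd_mul_lcm m n
      obtain ⟨c, hc⟩ := hlcm
      exact ⟨c, by rw [hba, hc, ← mul_assoc, hgl]⟩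
    have habs : (b : ℤ) - a = 0 := by
      apply Int.eq_zero_of_abs_lt_dvd hmn_dvd
      have hav : a < m * n := ZMod.val_lt t
      have hbv : b < m * n := ZMod.val_lt t'
      rw [abs_lt]
      constructor <;> push_cast <;> omega
    have hab : a = b := by omega
    exact ZMod.val_injective (m * n) hab
  have hbij : Function.Bijective H := by
    rw [Fintype.bijective_iff_injective_and_card]
    refine ⟨hinj, ?_⟩
    simp [ZMod.card]
  have hsteps : ∀ t, DirProdStep (H t) (H (t + 1)) := by
    intro t
    by_cases hc : t.val % d < s₁
    · exact Or.inl ((harc t).1 hc)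
    · exact Or.inr ((harc t).2 (le_of_not_gt hc))
  have hval : ∀ (t : ZMod (m * n)) (a : ℕ),
      ((t + (a : ZMod (m * n))).val) % d = (t.val + a) % d := by
    intro t a
    rw [ZMod.val_add, Nat.mod_mod_of_dvd _ hdmn, ZMod.val_natCast]
    exact Nat.ModEq.add_left t.val ((Nat.mod_modEq a (m * n)).of_dvd hdmn)
  have hcfilter1 : ((Finset.range d).filter fun x => x < s₁).card = s₁ := by
    have h : (Finset.range d).filter (fun x => x < s₁) = Finset.range s₁ := by
      ext x
      simp only [Finset.mem_filter, Finset.mem_range]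
      omega
    rw [h, Finset.card_range]
  have hcfilter2 : ((Finset.range d).filter fun x => s₁ ≤ x).card = s₂ := by
    have h := Finset.card_filter_add_card_filter_not (s := Finset.range d)
      (p := fun x => x < s₁)
    have heq : (Finset.range d).filter (fun x => ¬ x < s₁)
        = (Finset.range d).filter (fun x => s₁ ≤ x) := by
      apply Finset.filter_congr
      intro x _
      simp [not_lt]
    rw [Finset.card_range, heq] at h
    omega
  have hwin : WindowCounts H d s₁ s₂ := by
    intro t
    constructor
    · have h1 : (Finset.range d).filter (fun a => ArcInDim1 H (t + (a : ℕ)))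
          = (Finset.range d).filter (fun a => (t.val + a) % d < s₁) := by
        apply Finset.filter_congr
        intro a _
        simp only [harc1, hval]
      rw [h1, TEaux.count_shift d t.val hd0 (fun x => x < s₁), hcfilter1]
    · have h1 : (Finset.range d).filter (fun a => ArcInDim2 H (t + (a : ℕ)))
          = (Finset.range d).filter (fun a => s₁ ≤ (t.val + a) % d) := by
        apply Finset.filter_congr
        intro a _
        simp only [harc2, hval]
      rw [h1, TEaux.count_shift d t.val hd0 (fun x => s₁ ≤ x), hcfilter2]
  exact ⟨H, ⟨hbij, hsteps⟩, hwin⟩
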